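/- arXiv:0805.3219 — 2 statements merged into one kernel-verified Lean document; each statement's English description precedes it below -/
import Mathlib

section
/- For every R > 0 there exists a constant C = C(R) > 0 such that every map u:ℝ→𝕊² with uₓ ∈ H²(ℝ;ℝ³) and ‖uₓ‖_{L²(ℝ;ℝ³)} ≤ R satisfies ‖uₓ‖_{L^∞(ℝ;ℝ³)} ≤ C ( 1 + ‖∇ₓ²uₓ‖_{L²(ℝ;ℝ³)}^{1/4} ). -/
open MeasureTheory Matrix Filter
open scoped Matrix

noncomputable section

/-- ℝ³, the codomain of sphere-valued maps. -/
abbrev R3 := Fin 3 → ℝ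

/-- Covariant derivative, along the sphere-valued map `u`, of a vector field `V` along `u`:
`∇ₓV = Vₓ + (V·uₓ)u`. -/
def covD (u V : ℝ → R3) : ℝ → R3 := fun x => deriv V x + (V x ⬝ᵥ deriv u x) • u x

/-- Iterated covariant derivative along `u`. -/
def covDIter (u : ℝ → R3) : ℕ → (ℝ → R3) → ℝ → R3
  | 0, V => V
  | n + 1, V => covD u (covDIter u n V)

/-- Membership of `f` in the Sobolev space `H^m(ℝ;ℝ³)` (classical-derivative reading):
all derivatives of order `< m` exist and all derivatives of order `≤ m` are in `L²`. -/
def InHm (m : ℕ) (f : ℝ → R3) : Prop :=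
  (∀ j < m, Differentiable ℝ (iteratedDeriv j f)) ∧
  ∀ j ≤ m, MemLp (iteratedDeriv j f) 2 volume

/-- `u ∈ H^{m+1}(ℝ;𝕊²)` : a continuous map into the unit sphere whose derivative `uₓ`
belongs to `H^m(ℝ;ℝ³)`. -/
def SphereSobolev (m : ℕ) (u : ℝ → R3) : Prop :=
  Continuous u ∧ (∀ x, u x ⬝ᵥ u x = 1) ∧ Differentiable ℝ u ∧ InHm m (deriv u)

/-- `u ∈ C(I;H^{m+1}(ℝ;𝕊²))` : `u` is continuous on `I × ℝ`, `u(t) ∈ H^{m+1}(ℝ;𝕊²)` for every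
`t ∈ I`, and `t ↦ uₓ(t,·)` is continuous from `I` into `H^m(ℝ;ℝ³)` (i.e. all `x`-derivatives of
`uₓ` up to order `m` are continuous in `t` with respect to the `L²`-distance). -/
def ContIntoHm (I : Set ℝ) (m : ℕ) (u : ℝ → ℝ → R3) : Prop :=
  ContinuousOn (fun p : ℝ × ℝ => u p.1 p.2) (I ×ˢ (Set.univ : Set ℝ)) ∧
  (∀ t ∈ I, SphereSobolev m (u t)) ∧
  ∀ j ≤ m, ∀ t₀ ∈ I,
    Tendsto
      (fun t =>
        eLpNorm (fun x => iteratedDeriv j (deriv (u t)) x - iteratedDeriv j (deriv (u t₀)) x)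
          2 volume)
      (nhdsWithin t₀ I) (nhds 0)

/-- `u` solves `u_t = -ε∇ₓ³uₓ + a∇ₓ²uₓ + u×uₓₓ + b|uₓ|²uₓ` on `I × ℝ`
(the dispersive flow equation for `ε = 0`, its parabolic regularization for `ε > 0`). -/
def SolvesDF (ε a b : ℝ) (I : Set ℝ) (u : ℝ → ℝ → R3) : Prop :=
  ∀ t ∈ I, ∀ x : ℝ,
    HasDerivWithinAt (fun s => u s x)
      ((-ε) • covDIter (u t) 3 (deriv (u t)) x
        + a • covDIter (u t) 2 (deriv (u t)) x
        + (u t x) ⨯₃ (iteratedDeriv 2 (u t) x)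
        + (b * (deriv (u t) x ⬝ᵥ deriv (u t) x)) • deriv (u t) x)
      I t

/-- The squared `L²(ℝ;ℝ³)`-norm (with the Euclidean inner product on ℝ³). -/
def l2normSq (f : ℝ → R3) : ℝ := ∫ x : ℝ, f x ⬝ᵥ f x

/-- The `L²(ℝ;ℝ³)`-norm (with the Euclidean inner product on ℝ³). -/
def l2norm (f : ℝ → R3) : ℝ := Real.sqrt (l2normSq f)

/-- The `H^m(ℝ;ℝ³)`-norm of `f`. -/
def sobNorm (m : ℕ) (f : ℝ → R3) : ℝ :=
  Real.sqrt (∑ j ∈ Finset.range (m + 1), l2normSq (iteratedDeriv j f))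

/-- The initial value problem with data `u₀` for the equation encoded by `SolvesDF ε a b`
has a unique solution in the class `C(I;H^{m+1}(ℝ;𝕊²))`. -/
def IsUniqueSolOn (I : Set ℝ) (ε a b : ℝ) (m : ℕ) (u₀ : ℝ → R3) : Prop :=
  ∃ u : ℝ → ℝ → R3,
    (ContIntoHm I m u ∧ SolvesDF ε a b I u ∧ ∀ x, u 0 x = u₀ x) ∧
    ∀ v : ℝ → ℝ → R3,
      (ContIntoHm I m v ∧ SolvesDF ε a b I v ∧ ∀ x, v 0 x = u₀ x) →
      ∀ t ∈ I, ∀ x, v t x = u t x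


section UxAuxiliary

lemma dot_self_nonneg' (v : R3) : 0 ≤ v ⬝ᵥ v :=
  Finset.sum_nonneg fun _ _ => mul_self_nonneg _

lemma sq_dot_le' (v w : R3) : (v ⬝ᵥ w) ^ 2 ≤ (v ⬝ᵥ v) * (w ⬝ᵥ w) := by
  simpa [dotProduct, sq] using Finset.sum_mul_sq_le_sq_mul_sq Finset.univ v w

lemma abs_dot_le' (v w : R3) : |v ⬝ᵥ w| ≤ Real.sqrt (v ⬝ᵥ v) * Real.sqrt (w ⬝ᵥ w) := by
  calc |v ⬝ᵥ w| = Real.sqrt ((v ⬝ᵥ w) ^ 2) := (Real.sqrt_sq_eq_abs _).symm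
    _ ≤ Real.sqrt ((v ⬝ᵥ v) * (w ⬝ᵥ w)) := Real.sqrt_le_sqrt (sq_dot_le' v w)
    _ = _ := Real.sqrt_mul (dot_self_nonneg' v) _

lemma dot_expand' (a b : ℝ) (v w v' w' : R3) :
    (v + a • w) ⬝ᵥ (v' + b • w') =
      v ⬝ᵥ v' + b * (v ⬝ᵥ w') + a * (w ⬝ᵥ v') + a * b * (w ⬝ᵥ w') := by
  simp only [dotProduct_add, add_dotProduct, dotProduct_smul, smul_dotProduct, smul_eq_mul]
  ring

lemma hasDerivAt_dot' {f g : ℝ → R3} {f' g' : R3} {x : ℝ}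
    (hf : HasDerivAt f f' x) (hg : HasDerivAt g g' x) :
    HasDerivAt (fun y => f y ⬝ᵥ g y) (f' ⬝ᵥ g x + f x ⬝ᵥ g') x := by
  have h : ∀ i ∈ Finset.univ, HasDerivAt (fun y => f y i * g y i)
      (f' i * g x i + f x i * g' i) x :=
    fun i _ => ((hasDerivAt_pi.1 hf) i).mul ((hasDerivAt_pi.1 hg) i)
  simpa [dotProduct, Finset.sum_add_distrib] using HasDerivAt.fun_sum h

lemma measurable_dot' {F G : ℝ → R3} (hF : Measurable F) (hG : Measurable G) :
    Measurable fun x => F x ⬝ᵥ G x := by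
  simp only [dotProduct]
  exact Finset.measurable_sum _ fun i _ => (hF.eval).mul (hG.eval)

lemma integrable_dot_self' {F : ℝ → R3} (hFm : Measurable F) (hF : MemLp F 2 volume) :
    Integrable (fun x => F x ⬝ᵥ F x) := by
  have h2 : Integrable (fun x => ‖F x‖ ^ (2:ℝ)) := by
    simpa using hF.integrable_norm_rpow (by norm_num) (by norm_num)
  refine Integrable.mono' (h2.const_mul 3) ((measurable_dot' hFm hFm).aestronglyMeasurable) ?_
  filter_upwards with x
  rw [Real.norm_eq_abs, abs_of_nonneg (dot_self_nonneg' (F x))]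
  have hb : ∀ i, F x i * F x i ≤ ‖F x‖ ^ (2:ℝ) := by
    intro i
    rw [Real.rpow_two]
    have h1 : |F x i| ≤ ‖F x‖ := by
      simpa [Real.norm_eq_abs] using norm_le_pi_norm (F x) i
    nlinarith [abs_nonneg (F x i), norm_nonneg (F x), abs_mul_abs_self (F x i)]
  calc F x ⬝ᵥ F x = ∑ i : Fin 3, F x i * F x i := rfl
    _ ≤ ∑ _i : Fin 3, ‖F x‖ ^ (2:ℝ) := Finset.sum_le_sum fun i _ => hb i
    _ = 3 * ‖F x‖ ^ (2:ℝ) := by simp [Finset.sum_const]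

lemma memℒp_sqrt_dot' {F : ℝ → R3} (hFm : Measurable F)
    (hF : Integrable (fun x => F x ⬝ᵥ F x)) :
    MemLp (fun x => Real.sqrt (F x ⬝ᵥ F x)) 2 volume := by
  rw [memLp_two_iff_integrable_sq ((measurable_dot' hFm hFm).sqrt.aestronglyMeasurable)]
  refine hF.congr ?_
  filter_upwards with x
  rw [Real.sq_sqrt (dot_self_nonneg' (F x))]

lemma l2_cs {F G : ℝ → R3} (hFm : Measurable F) (hGm : Measurable G)
    (hF : Integrable (fun x => F x ⬝ᵥ F x)) (hG : Integrable (fun x => G x ⬝ᵥ G x)) :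
    Integrable (fun x => F x ⬝ᵥ G x) ∧
    ∫ x, |F x ⬝ᵥ G x| ≤ l2norm F * l2norm G := by
  set f := fun x => Real.sqrt (F x ⬝ᵥ F x) with hf
  set g := fun x => Real.sqrt (G x ⬝ᵥ G x) with hg
  have hfm : Measurable f := (measurable_dot' hFm hFm).sqrt
  have hgm : Measurable g := (measurable_dot' hGm hGm).sqrt
  have hfg_int : Integrable (fun x => f x * g x) := by
    refine Integrable.mono' ((hF.add hG).const_mul (1/2)) (hfm.mul hgm).aestronglyMeasurable ?_
    filter_upwards with x
    have h1 : 0 ≤ f x := Real.sqrt_nonneg _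
    have h2 : 0 ≤ g x := Real.sqrt_nonneg _
    have h3 : f x ^ 2 = F x ⬝ᵥ F x := Real.sq_sqrt (dot_self_nonneg' _)
    have h4 : g x ^ 2 = G x ⬝ᵥ G x := Real.sq_sqrt (dot_self_nonneg' _)
    rw [Real.norm_eq_abs, abs_of_nonneg (mul_nonneg h1 h2)]
    simp only [Pi.add_apply]
    nlinarith [sq_nonneg (f x - g x)]
  have hint : Integrable (fun x => F x ⬝ᵥ G x) := by
    refine Integrable.mono' hfg_int (measurable_dot' hFm hGm).aestronglyMeasurable ?_
    filter_upwards with x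
    rw [Real.norm_eq_abs]
    exact abs_dot_le' _ _
  refine ⟨hint, ?_⟩
  have step1 : ∫ x, |F x ⬝ᵥ G x| ≤ ∫ x, f x * g x :=
    integral_mono hint.abs hfg_int fun x => abs_dot_le' _ _
  have hof : (ENNReal.ofReal (2:ℝ)) = 2 := by norm_num
  have holder := integral_mul_le_Lp_mul_Lq_of_nonneg
    Real.HolderConjugate.two_two
    (Filter.Eventually.of_forall fun x => Real.sqrt_nonneg (F x ⬝ᵥ F x))
    (Filter.Eventually.of_forall fun x => Real.sqrt_nonneg (G x ⬝ᵥ G x))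
    (hof.symm ▸ memℒp_sqrt_dot' hFm hF) (hof.symm ▸ memℒp_sqrt_dot' hGm hG)
  have hf2 : ∫ x, f x ^ (2:ℝ) = ∫ x, F x ⬝ᵥ F x := by
    refine integral_congr_ae (Filter.Eventually.of_forall fun x => ?_)
    show (Real.sqrt (F x ⬝ᵥ F x)) ^ (2:ℝ) = F x ⬝ᵥ F x
    rw [Real.rpow_two, Real.sq_sqrt (dot_self_nonneg' _)]
  have hg2 : ∫ x, g x ^ (2:ℝ) = ∫ x, G x ⬝ᵥ G x := by
    refine integral_congr_ae (Filter.Eventually.of_forall fun x => ?_)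
    show (Real.sqrt (G x ⬝ᵥ G x)) ^ (2:ℝ) = G x ⬝ᵥ G x
    rw [Real.rpow_two, Real.sq_sqrt (dot_self_nonneg' _)]
  rw [hf2, hg2] at holder
  calc ∫ x, |F x ⬝ᵥ G x| ≤ ∫ x, f x * g x := step1
    _ ≤ (∫ x, F x ⬝ᵥ F x) ^ ((1:ℝ)/2) * (∫ x, G x ⬝ᵥ G x) ^ ((1:ℝ)/2) := holder
    _ = l2norm F * l2norm G := by
      rw [l2norm, l2norm, l2normSq, l2normSq, Real.sqrt_eq_rpow, Real.sqrt_eq_rpow]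

end UxAuxiliary

set_option maxHeartbeats 2000000 in
/-- For every `R > 0` there is `C = C(R) > 0` such that every `u : ℝ → 𝕊²`
with `uₓ ∈ H²(ℝ;ℝ³)` and `‖uₓ‖_{L²} ≤ R` satisfies
`‖uₓ‖_{L^∞} ≤ C (1 + ‖∇ₓ²uₓ‖_{L²}^{1/4})` (the pointwise Euclidean length of `uₓ` is bounded
by the right-hand side). -/

theorem ux_Linfty_bound (R : ℝ) (hR : 0 < R) :
    ∃ C : ℝ, 0 < C ∧
      ∀ u : ℝ → R3, Continuous u → (∀ x, u x ⬝ᵥ u x = 1) → Differentiable ℝ u →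
        InHm 2 (deriv u) → l2norm (deriv u) ≤ R →
        ∀ x : ℝ, Real.sqrt (deriv u x ⬝ᵥ deriv u x)
          ≤ C * (1 + l2norm (covDIter u 2 (deriv u)) ^ ((1 : ℝ) / 4)) := by
  refine ⟨1 + Real.sqrt (2 * R * Real.sqrt R), by positivity, ?_⟩
  intro u hu_cont hsph hu hH2 hl2R x
  obtain ⟨hdiff, hl2⟩ := hH2
  set p : ℝ → R3 := deriv u with hp
  set q : ℝ → R3 := deriv p with hq
  set r : ℝ → R3 := deriv q with hr
  -- differentiability
  have hpdiff : Differentiable ℝ p := by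
    have := hdiff 0 (by norm_num); rwa [iteratedDeriv_zero] at this
  have hqdiff : Differentiable ℝ q := by
    have := hdiff 1 (by norm_num); rwa [iteratedDeriv_one, ← hq] at this
  have hud : ∀ y, HasDerivAt u (p y) y := fun y => (hu y).hasDerivAt
  have hpd : ∀ y, HasDerivAt p (q y) y := fun y => (hpdiff y).hasDerivAt
  have hqd : ∀ y, HasDerivAt q (r y) y := fun y => (hqdiff y).hasDerivAt
  -- measurability
  have hum : Measurable u := hu_cont.measurable
  have hpm : Measurable p := hpdiff.continuous.measurable
  have hqm : Measurable q := hqdiff.continuous.measurable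
  have hrm : Measurable r := by rw [hr]; exact measurable_deriv q
  -- Memℒp
  have hpL2 : MemLp p 2 volume := by
    have := hl2 0 (by norm_num); rwa [iteratedDeriv_zero] at this
  have hqL2 : MemLp q 2 volume := by
    have := hl2 1 (by norm_num); rwa [iteratedDeriv_one, ← hq] at this
  have hrL2 : MemLp r 2 volume := by
    have := hl2 2 le_rfl
    rwa [iteratedDeriv_succ, iteratedDeriv_one, ← hq, ← hr] at this
  -- sphere identities
  have hpu : ∀ y, p y ⬝ᵥ u y = 0 := by
    intro y
    have h1 : HasDerivAt (fun z => u z ⬝ᵥ u z) (p y ⬝ᵥ u y + u y ⬝ᵥ p y) y :=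
      hasDerivAt_dot' (hud y) (hud y)
    have h2 : (fun z => u z ⬝ᵥ u z) = fun _ => (1:ℝ) := funext hsph
    rw [h2] at h1
    have h3 := (hasDerivAt_const y (1:ℝ)).unique h1
    rw [dotProduct_comm (u y) (p y)] at h3
    linarith
  have hqu : ∀ y, q y ⬝ᵥ u y = -(p y ⬝ᵥ p y) := by
    intro y
    have h1 : HasDerivAt (fun z => p z ⬝ᵥ u z) (q y ⬝ᵥ u y + p y ⬝ᵥ p y) y :=
      hasDerivAt_dot' (hpd y) (hud y)
    have h2 : (fun z => p z ⬝ᵥ u z) = fun _ => (0:ℝ) := funext hpu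
    rw [h2] at h1
    have h3 := (hasDerivAt_const y (0:ℝ)).unique h1
    linarith
  have hunorm : ∀ y, ‖u y‖ ≤ 1 := by
    intro y
    rw [pi_norm_le_iff_of_nonneg zero_le_one]
    intro i
    have h1 : u y i * u y i ≤ 1 := by
      have h2 : u y ⬝ᵥ u y = 1 := hsph y
      have h3 : u y i * u y i ≤ u y ⬝ᵥ u y :=
        Finset.single_le_sum (fun j _ => mul_self_nonneg (u y j)) (Finset.mem_univ i)
      linarith
    rw [Real.norm_eq_abs, abs_le]
    constructor <;> nlinarith
  -- derivative of g = |p|²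
  have hgd : ∀ y, HasDerivAt (fun z => p z ⬝ᵥ p z) (2 * (p y ⬝ᵥ q y)) y := by
    intro y
    have h1 := hasDerivAt_dot' (hpd y) (hpd y)
    convert h1 using 1
    rw [dotProduct_comm (q y) (p y)]; ring
  -- W = covD u p
  set W : ℝ → R3 := covD u p with hWdef
  have hW : ∀ y, W y = q y + (p y ⬝ᵥ p y) • u y := by
    intro y
    rw [hWdef]
    show deriv p y + (p y ⬝ᵥ deriv u y) • u y = _
    rw [← hq, ← hp]
  have hWd : ∀ y, HasDerivAt W
      (r y + ((p y ⬝ᵥ p y) • p y + (2 * (p y ⬝ᵥ q y)) • u y)) y := by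
    intro y
    have h1 : HasDerivAt (fun z => q z + (p z ⬝ᵥ p z) • u z)
        (r y + ((p y ⬝ᵥ p y) • p y + (2 * (p y ⬝ᵥ q y)) • u y)) y :=
      (hqd y).add ((hgd y).smul (hud y))
    exact h1.congr_of_eventuallyEq (Filter.Eventually.of_forall fun z => hW z)
  -- Z = covDIter u 2 p
  set Z : ℝ → R3 := covDIter u 2 p with hZset
  have hZ : ∀ y, Z y = r y + ((3 * (p y ⬝ᵥ q y)) • u y + (p y ⬝ᵥ p y) • p y) := by
    intro y
    have hZc : Z y = deriv W y + (W y ⬝ᵥ p y) • u y := by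
      rw [hZset]
      show covD u (covD u p) y = _
      rw [← hWdef]
      show deriv W y + (W y ⬝ᵥ deriv u y) • u y = _
      rw [← hp]
    rw [hZc, (hWd y).deriv, hW y, add_dotProduct, smul_dotProduct,
      dotProduct_comm (u y) (p y), hpu y, dotProduct_comm (q y) (p y)]
    simp only [smul_eq_mul, mul_zero, add_zero, smul_zero]
    module
  have hWm : Measurable W := by
    have : W = fun y => q y + (p y ⬝ᵥ p y) • u y := funext hW
    rw [this]
    exact hqm.add ((measurable_dot' hpm hpm).smul hum)
  have hZm : Measurable Z := by
    have : Z = fun y => r y + ((3 * (p y ⬝ᵥ q y)) • u y + (p y ⬝ᵥ p y) • p y) := funext hZ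
    rw [this]
    exact hrm.add ((((measurable_dot' hpm hqm).const_mul 3).smul hum).add
      ((measurable_dot' hpm hpm).smul hpm))
  clear_value Z W r q p
  -- basic integrabilities
  have ig : Integrable (fun y => p y ⬝ᵥ p y) := integrable_dot_self' hpm hpL2
  have iqq : Integrable (fun y => q y ⬝ᵥ q y) := integrable_dot_self' hqm hqL2
  have irr : Integrable (fun y => r y ⬝ᵥ r y) := integrable_dot_self' hrm hrL2
  obtain ⟨ih, _⟩ := l2_cs hpm hqm ig iqq
  have ig' : Integrable (fun y => 2 * (p y ⬝ᵥ q y)) := ih.const_mul 2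
  -- limits of g at ±∞ and Agmon bound
  have gbot : Tendsto (fun y => p y ⬝ᵥ p y) atBot (nhds 0) :=
    tendsto_zero_of_hasDerivAt_of_integrableOn_Iic (a := 0) (fun y _ => hgd y)
      ig'.integrableOn ig.integrableOn
  set K : ℝ := 2 * ∫ y, |p y ⬝ᵥ q y| with hKdef
  have hK0 : 0 ≤ K := by
    rw [hKdef]
    positivity
  have gle : ∀ y₀, p y₀ ⬝ᵥ p y₀ ≤ K := by
    intro y₀
    have hFTC := integral_Iic_of_hasDerivAt_of_tendsto (a := y₀)
      (f := fun y => p y ⬝ᵥ p y) (f' := fun y => 2 * (p y ⬝ᵥ q y))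
      ((hgd y₀).continuousAt.continuousWithinAt) (fun y _ => hgd y)
      ig'.integrableOn gbot
    rw [sub_zero] at hFTC
    have h1 : (∫ y in Set.Iic y₀, 2 * (p y ⬝ᵥ q y)) ≤ ∫ y in Set.Iic y₀, 2 * |p y ⬝ᵥ q y| := by
      refine integral_mono ig'.integrableOn ((ih.abs.const_mul 2).integrableOn) ?_
      intro y
      simp only
      have := le_abs_self (p y ⬝ᵥ q y)
      linarith
    have h2 : (∫ y in Set.Iic y₀, 2 * |p y ⬝ᵥ q y|) ≤ ∫ y, 2 * |p y ⬝ᵥ q y| := by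
      refine setIntegral_le_integral (ih.abs.const_mul 2) ?_
      filter_upwards with y
      positivity
    have h3 : (∫ y, 2 * |p y ⬝ᵥ q y|) = K := by
      rw [hKdef, integral_const_mul]
    linarith [hFTC ▸ h1]
  -- Memℒp upgrades
  have ig2 : Integrable (fun y => (p y ⬝ᵥ p y) ^ 2) := by
    refine Integrable.mono' (ig.const_mul K)
      (((measurable_dot' hpm hpm).pow_const 2).aestronglyMeasurable) ?_
    filter_upwards with y
    rw [Real.norm_eq_abs, abs_of_nonneg (sq_nonneg _), sq]
    have h1 := dot_self_nonneg' (p y)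
    have h2 := gle y
    nlinarith
  have hgL2 : MemLp (fun y => p y ⬝ᵥ p y) 2 volume := by
    rw [memLp_two_iff_integrable_sq (measurable_dot' hpm hpm).aestronglyMeasurable]
    exact ig2
  have hhsq : Integrable (fun y => (p y ⬝ᵥ q y) ^ 2) := by
    refine Integrable.mono' (iqq.const_mul K)
      (((measurable_dot' hpm hqm).pow_const 2).aestronglyMeasurable) ?_
    filter_upwards with y
    rw [Real.norm_eq_abs, abs_of_nonneg (sq_nonneg _)]
    have h1 := sq_dot_le' (p y) (q y)
    have h2 := gle y
    have h3 := dot_self_nonneg' (q y)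
    nlinarith
  have hhL2 : MemLp (fun y => p y ⬝ᵥ q y) 2 volume := by
    rw [memLp_two_iff_integrable_sq (measurable_dot' hpm hqm).aestronglyMeasurable]
    exact hhsq
  have hsmul_le : ∀ (c : ℝ → ℝ) (v : ℝ → R3) (y : ℝ), ‖v y‖ ≤ 1 →
      ‖c y • v y‖ ≤ ‖c y‖ := by
    intro c v y hv
    rw [norm_smul]
    calc ‖c y‖ * ‖v y‖ ≤ ‖c y‖ * 1 := by
          exact mul_le_mul_of_nonneg_left hv (norm_nonneg _)
      _ = ‖c y‖ := mul_one _
  have hWL2 : MemLp W 2 volume := by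
    have h1 : MemLp (fun y => (p y ⬝ᵥ p y) • u y) 2 volume := by
      refine MemLp.of_le hgL2 (((measurable_dot' hpm hpm).smul hum).aestronglyMeasurable) ?_
      filter_upwards with y
      exact hsmul_le (fun y => p y ⬝ᵥ p y) u y (hunorm y)
    have h2 : MemLp (fun y => q y + (p y ⬝ᵥ p y) • u y) 2 volume := hqL2.add h1
    exact h2.ae_eq (Filter.Eventually.of_forall fun y => (hW y).symm)
  have iWW : Integrable (fun y => W y ⬝ᵥ W y) := integrable_dot_self' hWm hWL2
  have hZL2 : MemLp Z 2 volume := by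
    have h1 : MemLp (fun y => (3 * (p y ⬝ᵥ q y)) • u y) 2 volume := by
      refine MemLp.of_le (hhL2.const_mul 3)
        ((((measurable_dot' hpm hqm).const_mul 3).smul hum).aestronglyMeasurable) ?_
      filter_upwards with y
      exact hsmul_le (fun y => 3 * (p y ⬝ᵥ q y)) u y (hunorm y)
    have h2 : MemLp (fun y => (p y ⬝ᵥ p y) • p y) 2 volume := by
      refine MemLp.of_le (hpL2.const_smul K)
        (((measurable_dot' hpm hpm).smul hpm).aestronglyMeasurable) ?_
      filter_upwards with y
      have h3 : |p y ⬝ᵥ p y| ≤ |K| := by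
        rw [abs_of_nonneg (dot_self_nonneg' _), abs_of_nonneg hK0]; exact gle y
      calc ‖(p y ⬝ᵥ p y) • p y‖ = |p y ⬝ᵥ p y| * ‖p y‖ := by
            rw [norm_smul, Real.norm_eq_abs]
        _ ≤ |K| * ‖p y‖ := mul_le_mul_of_nonneg_right h3 (norm_nonneg _)
        _ = ‖(K • p) y‖ := by rw [Pi.smul_apply, norm_smul, Real.norm_eq_abs]
    have h4 : MemLp (fun y => r y + ((3 * (p y ⬝ᵥ q y)) • u y + (p y ⬝ᵥ p y) • p y)) 2 volume :=
      hrL2.add (h1.add h2)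
    exact h4.ae_eq (Filter.Eventually.of_forall fun y => (hZ y).symm)
  have iZZ : Integrable (fun y => Z y ⬝ᵥ Z y) := integrable_dot_self' hZm hZL2
  obtain ⟨ipZ, hpZbound⟩ := l2_cs hpm hZm ig iZZ
  obtain ⟨ipW, hpWbound⟩ := l2_cs hpm hWm ig iWW
  -- pointwise identities
  have hWW : ∀ y, W y ⬝ᵥ W y = q y ⬝ᵥ q y - (p y ⬝ᵥ p y) ^ 2 := by
    intro y
    rw [hW y, dot_expand', dotProduct_comm (u y) (q y), hqu y, hsph y]
    ring
  have hpZid : ∀ y, p y ⬝ᵥ Z y = p y ⬝ᵥ r y + (p y ⬝ᵥ p y) ^ 2 := by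
    intro y
    rw [hZ y, dotProduct_add, dotProduct_add, dotProduct_smul, dotProduct_smul, hpu y]
    simp only [smul_eq_mul]
    ring
  have hpq_eq_pW : ∀ y, p y ⬝ᵥ q y = p y ⬝ᵥ W y := by
    intro y
    rw [hW y, dotProduct_add, dotProduct_smul, hpu y]
    simp
  have hhd : ∀ y, HasDerivAt (fun z => p z ⬝ᵥ q z) (W y ⬝ᵥ W y + p y ⬝ᵥ Z y) y := by
    intro y
    have h1 : HasDerivAt (fun z => p z ⬝ᵥ q z) (q y ⬝ᵥ q y + p y ⬝ᵥ r y) y :=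
      hasDerivAt_dot' (hpd y) (hqd y)
    convert h1 using 1
    rw [hWW y, hpZid y]; ring
  have ih' : Integrable (fun y => W y ⬝ᵥ W y + p y ⬝ᵥ Z y) := iWW.add ipZ
  have htop : Tendsto (fun y => p y ⬝ᵥ q y) atTop (nhds 0) :=
    tendsto_zero_of_hasDerivAt_of_integrableOn_Ioi (a := 0) (fun y _ => hhd y)
      ih'.integrableOn ih.integrableOn
  have hbot : Tendsto (fun y => p y ⬝ᵥ q y) atBot (nhds 0) :=
    tendsto_zero_of_hasDerivAt_of_integrableOn_Iic (a := 0) (fun y _ => hhd y)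
      ih'.integrableOn ih.integrableOn
  have hIic : (∫ y in Set.Iic 0, (W y ⬝ᵥ W y + p y ⬝ᵥ Z y)) = p 0 ⬝ᵥ q 0 - 0 :=
    integral_Iic_of_hasDerivAt_of_tendsto ((hhd 0).continuousAt.continuousWithinAt)
      (fun y _ => hhd y) ih'.integrableOn hbot
  have hIoi : (∫ y in Set.Ioi 0, (W y ⬝ᵥ W y + p y ⬝ᵥ Z y)) = 0 - p 0 ⬝ᵥ q 0 :=
    integral_Ioi_of_hasDerivAt_of_tendsto ((hhd 0).continuousAt.continuousWithinAt)
      (fun y _ => hhd y) ih'.integrableOn htop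
  have hsum : (∫ y, (W y ⬝ᵥ W y + p y ⬝ᵥ Z y)) = 0 := by
    rw [← intervalIntegral.integral_Iic_add_Ioi (b := 0) ih'.integrableOn ih'.integrableOn, hIic, hIoi]; ring
  have hsplit : (∫ y, W y ⬝ᵥ W y) + (∫ y, p y ⬝ᵥ Z y) = 0 := by
    rw [← integral_add iWW ipZ]; exact hsum
  -- numeric chain
  have hA0 : 0 ≤ l2norm p := Real.sqrt_nonneg _
  have hB0 : 0 ≤ l2norm Z := Real.sqrt_nonneg _
  have hWn0 : 0 ≤ l2norm W := Real.sqrt_nonneg _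
  have hWn2 : (l2norm W) ^ 2 ≤ l2norm p * l2norm Z := by
    have h1 : (l2norm W) ^ 2 = ∫ y, W y ⬝ᵥ W y := by
      rw [show l2norm W = Real.sqrt (∫ y, W y ⬝ᵥ W y) from rfl]
      exact Real.sq_sqrt (integral_nonneg fun y => dot_self_nonneg' (W y))
    have h3 : -(∫ y, p y ⬝ᵥ Z y) ≤ ∫ y, |p y ⬝ᵥ Z y| := by
      calc -(∫ y, p y ⬝ᵥ Z y) ≤ |∫ y, p y ⬝ᵥ Z y| := neg_le_abs _
        _ ≤ ∫ y, |p y ⬝ᵥ Z y| := by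
            simpa [Real.norm_eq_abs] using
              norm_integral_le_integral_norm (μ := volume) (fun y => p y ⬝ᵥ Z y)
    rw [h1]
    linarith [hpZbound]
  have hKle : K ≤ 2 * (l2norm p * l2norm W) := by
    have h2 : (∫ y, |p y ⬝ᵥ q y|) ≤ l2norm p * l2norm W := by
      calc (∫ y, |p y ⬝ᵥ q y|) = ∫ y, |p y ⬝ᵥ W y| :=
            integral_congr_ae (Filter.Eventually.of_forall fun y => by
              show |p y ⬝ᵥ q y| = |p y ⬝ᵥ W y|
              rw [hpq_eq_pW y])
        _ ≤ _ := hpWbound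
    rw [hKdef]
    linarith
  have hAR : l2norm p ≤ R := hl2R
  have hWnle : l2norm W ≤ Real.sqrt (R * l2norm Z) := by
    rw [show l2norm W = Real.sqrt ((l2norm W) ^ 2) from (Real.sqrt_sq hWn0).symm]
    apply Real.sqrt_le_sqrt
    calc (l2norm W) ^ 2 ≤ l2norm p * l2norm Z := hWn2
      _ ≤ R * l2norm Z := mul_le_mul_of_nonneg_right hAR hB0
  have hgfin : p x ⬝ᵥ p x ≤ 2 * R * (Real.sqrt R * Real.sqrt (l2norm Z)) := by
    have h5 : l2norm p * l2norm W ≤ R * Real.sqrt (R * l2norm Z) :=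
      mul_le_mul hAR hWnle hWn0 hR.le
    have h6 : p x ⬝ᵥ p x ≤ K := gle x
    rw [Real.sqrt_mul hR.le] at h5
    linarith
  set t := (l2norm Z) ^ ((1:ℝ)/4) with htdef
  have ht0 : 0 ≤ t := Real.rpow_nonneg hB0 _
  have ht2 : t ^ 2 = Real.sqrt (l2norm Z) := by
    rw [htdef, ← Real.rpow_natCast ((l2norm Z) ^ ((1:ℝ)/4)) 2, ← Real.rpow_mul hB0,
      Real.sqrt_eq_rpow]
    norm_num
  have hfinal : Real.sqrt (p x ⬝ᵥ p x) ≤ Real.sqrt (2 * R * Real.sqrt R) * t := by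
    calc Real.sqrt (p x ⬝ᵥ p x) ≤ Real.sqrt ((2 * R * Real.sqrt R) * t ^ 2) := by
          apply Real.sqrt_le_sqrt
          rw [ht2]
          calc p x ⬝ᵥ p x ≤ 2 * R * (Real.sqrt R * Real.sqrt (l2norm Z)) := hgfin
            _ = 2 * R * Real.sqrt R * Real.sqrt (l2norm Z) := by ring
      _ = Real.sqrt (2 * R * Real.sqrt R) * Real.sqrt (t ^ 2) :=
          Real.sqrt_mul (by positivity) _
      _ = Real.sqrt (2 * R * Real.sqrt R) * t := by rw [Real.sqrt_sq ht0]
  have hC0 : 0 ≤ Real.sqrt (2 * R * Real.sqrt R) := Real.sqrt_nonneg _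
  calc Real.sqrt (p x ⬝ᵥ p x) ≤ Real.sqrt (2 * R * Real.sqrt R) * t := hfinal
    _ ≤ (1 + Real.sqrt (2 * R * Real.sqrt R)) * (1 + t) := by nlinarith



end
end

section
/- Let a, b : ℝ → ℂ be smooth functions with Im a ∈ L²(ℝ;ℝ), let f : ℝ×ℝ → ℂ, and let u : ℝ×ℝ → ℂ be C¹ in t and C³ in x and solve u_t + u_{xxx} + a(x)u_x + b(x)u = f(t,x). Define Φ(x) = (1/3)∫_{−∞}^x (Im a(y))² dy and v(t,x) = e^{Φ(x)} u(t,x). Then v solves v_t + v_{xxx} − (Im a(x))² v_{xx} + ( ã(x) + i Im a(x) ) v_x + b̃(x) v = e^{Φ(x)} f(t,x), where ã = Re a + (1/3)(Im a)⁴ − 2 (Im a)(Im a)' is real-valued and b̃ = b − Φ''' + 3Φ'Φ'' − (Φ')³ − aΦ' with Φ' = (1/3)(Im a)². In particular, the gauge transformation u ↦ e^{Φ}u converts the non-self-adjoint first-order term i(Im a)∂ₓ into one accompanied by the dissipative second-order term −(Im a)²∂ₓ². -/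
open MeasureTheory

/-- Tarama's gauge transformation. Let `a, b : ℝ → ℂ` be smooth with
`Im a ∈ L²(ℝ;ℝ)`, and let `u` (C¹ in `t`, C³ in `x`) solve
`u_t + u_{xxx} + a(x)u_x + b(x)u = f`. With `Φ(x) = (1/3)∫_{−∞}^x (Im a)² dy` and
`v = e^{Φ(x)}u`, the function `v` solves
`v_t + v_{xxx} − (Im a)² v_{xx} + (ã + i Im a) v_x + b̃ v = e^{Φ} f`, where
`ã = Re a + (1/3)(Im a)⁴ − 2(Im a)(Im a)'` is real-valued and
`b̃ = b − Φ''' + 3Φ'Φ'' − (Φ')³ − aΦ'` with `Φ' = (1/3)(Im a)²`. -/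
theorem tarama_gauge_transformation
    (a b : ℝ → ℂ) (f : ℝ → ℝ → ℂ) (u : ℝ → ℝ → ℂ)
    (ha : ContDiff ℝ (⊤ : ℕ∞) a) (hb : ContDiff ℝ (⊤ : ℕ∞) b)
    (haL2 : MemLp (fun x => (a x).im) 2 volume)
    (hut : ∀ x : ℝ, ContDiff ℝ 1 (fun t => u t x))
    (hux : ∀ t : ℝ, ContDiff ℝ 3 (u t))
    (heq : ∀ t x : ℝ,
      deriv (fun s => u s x) t + iteratedDeriv 3 (u t) x
          + a x * deriv (u t) x + b x * u t x = f t x)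
    (Φ : ℝ → ℝ) (hΦ : ∀ x : ℝ, Φ x = (1 / 3) * ∫ y in Set.Iic x, ((a y).im) ^ 2)
    (v : ℝ → ℝ → ℂ) (hv : ∀ t x : ℝ, v t x = Complex.exp ((Φ x : ℂ)) * u t x) :
    ∀ t x : ℝ,
      deriv (fun s => v s x) t + iteratedDeriv 3 (v t) x
          - ((((a x).im) ^ 2 : ℝ) : ℂ) * iteratedDeriv 2 (v t) x
          + ((((a x).re + (1 / 3) * ((a x).im) ^ 4
                - 2 * (a x).im * deriv (fun y => (a y).im) x : ℝ) : ℂ)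
              + Complex.I * (((a x).im : ℝ) : ℂ)) * deriv (v t) x
          + (b x
              - ((iteratedDeriv 2 (fun y => (1 / 3) * ((a y).im) ^ 2) x : ℝ) : ℂ)
              + ((3 * ((1 / 3) * ((a x).im) ^ 2)
                    * deriv (fun y => (1 / 3) * ((a y).im) ^ 2) x : ℝ) : ℂ)
              - ((((1 / 3) * ((a x).im) ^ 2) ^ 3 : ℝ) : ℂ)
              - a x * ((((1 / 3) * ((a x).im) ^ 2 : ℝ)) : ℂ)) * v t x
        = Complex.exp ((Φ x : ℂ)) * f t x := by
  intro t x
  -- `s = Im a` is smooth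
  have him : ContDiff ℝ (⊤ : ℕ∞) (fun y => (a y).im) := Complex.imCLM.contDiff.comp ha
  have hsd : ∀ y, HasDerivAt (fun z => (a z).im) (deriv (fun z => (a z).im) y) y :=
    fun y => ((him.differentiable (by simp)) y).hasDerivAt
  -- `p = Φ' = (1/3) s²` is smooth
  have hp : ContDiff ℝ (⊤ : ℕ∞) (fun y => (1 / 3 : ℝ) * ((a y).im) ^ 2) :=
    contDiff_const.mul (him.pow 2)
  have hpd : ∀ y, HasDerivAt (fun z => (1 / 3 : ℝ) * ((a z).im) ^ 2)
      (deriv (fun z => (1 / 3 : ℝ) * ((a z).im) ^ 2) y) y :=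
    fun y => ((hp.differentiable (by simp)) y).hasDerivAt
  have hq : ContDiff ℝ (⊤ : ℕ∞) (deriv (fun z => (1 / 3 : ℝ) * ((a z).im) ^ 2)) :=
    (contDiff_infty_iff_deriv.mp hp).2
  have hqd : ∀ y, HasDerivAt (deriv (fun z => (1 / 3 : ℝ) * ((a z).im) ^ 2))
      (deriv (deriv (fun z => (1 / 3 : ℝ) * ((a z).im) ^ 2)) y) y :=
    fun y => ((hq.differentiable (by simp)) y).hasDerivAt
  have hq_eq : deriv (fun z => (1 / 3 : ℝ) * ((a z).im) ^ 2) x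
      = 2 / 3 * ((a x).im * deriv (fun z => (a z).im) x) := by
    have h : HasDerivAt (fun z => (1 / 3 : ℝ) * ((a z).im) ^ 2) _ x :=
      ((hsd x).pow 2).const_mul (1 / 3 : ℝ)
    rw [h.deriv]; push_cast; ring
  -- Φ has derivative p
  have hint : Integrable (fun z => ((a z).im) ^ 2) volume := haL2.integrable_sq
  have hΦd : ∀ y, HasDerivAt Φ ((1 / 3 : ℝ) * ((a y).im) ^ 2) y := by
    intro y
    have hFe : Φ = fun z => (1 / 3 : ℝ) *
        ((∫ w in Set.Iic (0 : ℝ), ((a w).im) ^ 2) + ∫ w in (0 : ℝ)..z, ((a w).im) ^ 2) := by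
      funext z
      rw [hΦ z, ← intervalIntegral.integral_Iic_sub_Iic hint.integrableOn hint.integrableOn]
      ring
    rw [hFe]
    have hd : HasDerivAt (fun z => ∫ w in (0 : ℝ)..z, ((a w).im) ^ 2) (((a y).im) ^ 2) y :=
      intervalIntegral.integral_hasDerivAt_right hint.intervalIntegrable
        ((him.continuous.pow 2).stronglyMeasurableAtFilter _ _)
        ((him.continuous.pow 2).continuousAt)
    exact (hd.const_add _).const_mul (1 / 3 : ℝ)
  -- the gauge factor
  have hgd : ∀ y, HasDerivAt (fun z => Complex.exp ((Φ z : ℂ)))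
      (Complex.exp ((Φ y : ℂ)) * (((1 / 3 : ℝ) * ((a y).im) ^ 2 : ℝ) : ℂ)) y :=
    fun y => ((hΦd y).ofReal_comp).cexp
  -- spatial derivatives of u
  have hud0 : ∀ y, HasDerivAt (u t) (deriv (u t) y) y :=
    fun y => (((hux t).differentiable (by norm_num)) y).hasDerivAt
  have hud1 : ∀ y, HasDerivAt (deriv (u t)) (iteratedDeriv 2 (u t) y) y := by
    intro y
    have hdf : Differentiable ℝ (iteratedDeriv 1 (u t)) :=
      (hux t).differentiable_iteratedDeriv 1 (by norm_num)
    rw [iteratedDeriv_one] at hdf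
    have := (hdf y).hasDerivAt
    rwa [show iteratedDeriv 2 (u t) = deriv (deriv (u t)) by
      simp [iteratedDeriv_succ, iteratedDeriv_one]]
  have hud2 : ∀ y, HasDerivAt (iteratedDeriv 2 (u t)) (iteratedDeriv 3 (u t) y) y := by
    intro y
    have hdf : Differentiable ℝ (iteratedDeriv 2 (u t)) :=
      (hux t).differentiable_iteratedDeriv 2 (by norm_num)
    have := (hdf y).hasDerivAt
    rwa [show iteratedDeriv 3 (u t) = deriv (iteratedDeriv 2 (u t)) from iteratedDeriv_succ]
  -- first spatial derivative of v
  have hvfun : v t = fun z => Complex.exp ((Φ z : ℂ)) * u t z := funext fun z => hv t z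
  have dv1 : ∀ y, HasDerivAt (v t)
      (Complex.exp ((Φ y : ℂ)) * (deriv (u t) y
        + (((1 / 3 : ℝ) * ((a y).im) ^ 2 : ℝ) : ℂ) * u t y)) y := by
    intro y
    rw [hvfun]
    have : HasDerivAt (fun z => Complex.exp ((Φ z : ℂ)) * u t z) _ y := (hgd y).mul (hud0 y)
    convert this using 1
    ring
  have e1 : deriv (v t) = fun y => Complex.exp ((Φ y : ℂ)) * (deriv (u t) y
      + (((1 / 3 : ℝ) * ((a y).im) ^ 2 : ℝ) : ℂ) * u t y) :=
    funext fun y => (dv1 y).deriv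
  -- second spatial derivative of v
  have dv2 : ∀ y, HasDerivAt (fun z => Complex.exp ((Φ z : ℂ)) * (deriv (u t) z
      + (((1 / 3 : ℝ) * ((a z).im) ^ 2 : ℝ) : ℂ) * u t z))
      (Complex.exp ((Φ y : ℂ)) * (iteratedDeriv 2 (u t) y
        + 2 * (((1 / 3 : ℝ) * ((a y).im) ^ 2 : ℝ) : ℂ) * deriv (u t) y
        + (((deriv (fun z => (1 / 3 : ℝ) * ((a z).im) ^ 2) y : ℝ) : ℂ)
            + ((((1 / 3 : ℝ) * ((a y).im) ^ 2) ^ 2 : ℝ) : ℂ)) * u t y)) y := by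
    intro y
    have hP : HasDerivAt (fun z => ((((1 / 3 : ℝ) * ((a z).im) ^ 2 : ℝ)) : ℂ))
        (((deriv (fun z => (1 / 3 : ℝ) * ((a z).im) ^ 2) y : ℝ)) : ℂ) y := (hpd y).ofReal_comp
    have : HasDerivAt (fun z => Complex.exp ((Φ z : ℂ)) * (deriv (u t) z
        + (((1 / 3 : ℝ) * ((a z).im) ^ 2 : ℝ) : ℂ) * u t z)) _ y :=
      (hgd y).mul ((hud1 y).add (hP.mul (hud0 y)))
    convert this using 1
    push_cast
    ring
  have e2fun : deriv (deriv (v t)) = fun y => Complex.exp ((Φ y : ℂ)) * (iteratedDeriv 2 (u t) y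
      + 2 * (((1 / 3 : ℝ) * ((a y).im) ^ 2 : ℝ) : ℂ) * deriv (u t) y
      + (((deriv (fun z => (1 / 3 : ℝ) * ((a z).im) ^ 2) y : ℝ) : ℂ)
          + ((((1 / 3 : ℝ) * ((a y).im) ^ 2) ^ 2 : ℝ) : ℂ)) * u t y) := by
    rw [e1]
    exact funext fun y => (dv2 y).deriv
  have e2 : iteratedDeriv 2 (v t) x = Complex.exp ((Φ x : ℂ)) * (iteratedDeriv 2 (u t) x
      + 2 * (((1 / 3 : ℝ) * ((a x).im) ^ 2 : ℝ) : ℂ) * deriv (u t) x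
      + (((deriv (fun z => (1 / 3 : ℝ) * ((a z).im) ^ 2) x : ℝ) : ℂ)
          + ((((1 / 3 : ℝ) * ((a x).im) ^ 2) ^ 2 : ℝ) : ℂ)) * u t x) := by
    rw [show iteratedDeriv 2 (v t) = deriv (deriv (v t)) by
      simp [iteratedDeriv_succ, iteratedDeriv_one], e2fun]
  -- third spatial derivative of v
  have e3 : iteratedDeriv 3 (v t) x = Complex.exp ((Φ x : ℂ)) * (iteratedDeriv 3 (u t) x
      + 3 * (((1 / 3 : ℝ) * ((a x).im) ^ 2 : ℝ) : ℂ) * iteratedDeriv 2 (u t) x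
      + (3 * ((deriv (fun z => (1 / 3 : ℝ) * ((a z).im) ^ 2) x : ℝ) : ℂ)
          + 3 * (((1 / 3 : ℝ) * ((a x).im) ^ 2 : ℝ) : ℂ) ^ 2) * deriv (u t) x
      + (((deriv (deriv (fun z => (1 / 3 : ℝ) * ((a z).im) ^ 2)) x : ℝ) : ℂ)
          + 3 * (((1 / 3 : ℝ) * ((a x).im) ^ 2 : ℝ) : ℂ)
              * ((deriv (fun z => (1 / 3 : ℝ) * ((a z).im) ^ 2) x : ℝ) : ℂ)
          + (((1 / 3 : ℝ) * ((a x).im) ^ 2 : ℝ) : ℂ) ^ 3) * u t x) := by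
    have hP : HasDerivAt (fun z => ((((1 / 3 : ℝ) * ((a z).im) ^ 2 : ℝ)) : ℂ))
        (((deriv (fun z => (1 / 3 : ℝ) * ((a z).im) ^ 2) x : ℝ)) : ℂ) x := (hpd x).ofReal_comp
    have hQ : HasDerivAt (fun z => ((deriv (fun w => (1 / 3 : ℝ) * ((a w).im) ^ 2) z : ℝ) : ℂ))
        (((deriv (deriv (fun z => (1 / 3 : ℝ) * ((a z).im) ^ 2)) x : ℝ)) : ℂ) x := (hqd x).ofReal_comp
    have hP2 := ((hpd x).pow 2).ofReal_comp
    have hbig : HasDerivAt (fun y => Complex.exp ((Φ y : ℂ)) * (iteratedDeriv 2 (u t) y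
        + (2 * (((1 / 3 : ℝ) * ((a y).im) ^ 2 : ℝ) : ℂ) * deriv (u t) y
        + (((deriv (fun w => (1 / 3 : ℝ) * ((a w).im) ^ 2) y : ℝ) : ℂ)
          + ((((1 / 3 : ℝ) * ((a y).im) ^ 2) ^ 2 : ℝ) : ℂ)) * u t y))) _ x := (hgd x).mul ((hud2 x).add
      (((hP.const_mul (2 : ℂ)).mul (hud1 x)).add ((hQ.add hP2).mul (hud0 x))))
    have hder : HasDerivAt (fun y => Complex.exp ((Φ y : ℂ)) * (iteratedDeriv 2 (u t) y
        + 2 * (((1 / 3 : ℝ) * ((a y).im) ^ 2 : ℝ) : ℂ) * deriv (u t) y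
        + (((deriv (fun z => (1 / 3 : ℝ) * ((a z).im) ^ 2) y : ℝ) : ℂ)
            + ((((1 / 3 : ℝ) * ((a y).im) ^ 2) ^ 2 : ℝ) : ℂ)) * u t y))
        (Complex.exp ((Φ x : ℂ)) * (iteratedDeriv 3 (u t) x
        + 3 * (((1 / 3 : ℝ) * ((a x).im) ^ 2 : ℝ) : ℂ) * iteratedDeriv 2 (u t) x
        + (3 * ((deriv (fun z => (1 / 3 : ℝ) * ((a z).im) ^ 2) x : ℝ) : ℂ)
            + 3 * (((1 / 3 : ℝ) * ((a x).im) ^ 2 : ℝ) : ℂ) ^ 2) * deriv (u t) x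
        + (((deriv (deriv (fun z => (1 / 3 : ℝ) * ((a z).im) ^ 2)) x : ℝ) : ℂ)
            + 3 * (((1 / 3 : ℝ) * ((a x).im) ^ 2 : ℝ) : ℂ)
                * ((deriv (fun z => (1 / 3 : ℝ) * ((a z).im) ^ 2) x : ℝ) : ℂ)
            + (((1 / 3 : ℝ) * ((a x).im) ^ 2 : ℝ) : ℂ) ^ 3) * u t x)) x := by
      convert hbig using 1
      · funext y
        push_cast
        ring
      · simp only [Pi.add_apply, Pi.pow_apply]
        push_cast
        ring
    rw [show iteratedDeriv 3 (v t) = deriv (deriv (deriv (v t))) by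
      simp [iteratedDeriv_succ, iteratedDeriv_one], e2fun, hder.deriv]
  -- time derivative of v
  have e0 : deriv (fun s => v s x) t = Complex.exp ((Φ x : ℂ)) * deriv (fun s => u s x) t := by
    have hfe : (fun s => v s x) = fun s => Complex.exp ((Φ x : ℂ)) * u s x :=
      funext fun s => hv s x
    rw [hfe, deriv_const_mul _ (((hut x).differentiable (by simp)) t)]
  -- the third-derivative term of p
  have hr_eq : iteratedDeriv 2 (fun y => (1 / 3 : ℝ) * ((a y).im) ^ 2) x
      = deriv (deriv (fun z => (1 / 3 : ℝ) * ((a z).im) ^ 2)) x := by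
    simp [iteratedDeriv_succ, iteratedDeriv_one]
  -- assemble
  have heq' := heq t x
  have hA : a x = ((a x).re : ℂ) + ((a x).im : ℂ) * Complex.I := (Complex.re_add_im (a x)).symm
  rw [hA] at heq'
  rw [e0, e3, e2, e1, hv t x, hr_eq, hq_eq]
  push_cast
  linear_combination Complex.exp ((Φ x : ℂ)) * heq'
    + (-(Complex.exp ((Φ x : ℂ))) * ((1 / 3 : ℂ) * (((a x).im : ℝ) : ℂ) ^ 2) * u t x) * hA
end
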